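/- arXiv:1707.07536 — 3 statements merged into one kernel-verified Lean document; each statement's English description precedes it below -/
import Mathlib

section
/- Let a = (a_i) ∈ c₀ over a complete non-archimedean valued field K. The multiplication operator M_a : c₀ → c₀, M_a(x) = (a_i x_i)_{i∈ℕ}, is a continuous linear operator with ‖M_a‖ = ‖a‖_∞, it admits an adjoint (equal to itself), and lim_{n→∞} ‖M_a e_n‖_∞ = 0; consequently M_a is a compact operator. -/
open Filter Topology

noncomputable section

/-- `c₀(ℕ, K)`: the space of `K`-valued null sequences (zero-at-infinity functions on
discrete `ℕ`), with the supremum norm. -/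
abbrev Cz (K : Type) [NontriviallyNormedField K] := ZeroAtInftyContinuousMap ℕ K

/-- The canonical bilinear form `⟨x, y⟩ = ∑ᵢ xᵢ yᵢ` on `c₀`. -/
def pr {K : Type} [NontriviallyNormedField K] (x y : Cz K) : K := ∑' i, x i * y i

/-- The canonical basis vector `eᵢ` of `c₀`. -/
def e (K : Type) [NontriviallyNormedField K] (i : ℕ) : Cz K where
  toFun := fun j => if j = i then (1 : K) else 0
  continuous_toFun := continuous_of_discreteTopology
  zero_at_infty' := by
    rw [cocompact_eq_atTop]
    apply tendsto_nhds_of_eventually_eq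
    filter_upwards [eventually_gt_atTop i] with j hj
    simp [hj.ne']

/-- A continuous linear operator on `c₀` is compact iff it is a uniform limit of
finite-rank continuous operators (equivalently, it maps the unit ball to a compactoid). -/
def IsCompactOp {K : Type} [NontriviallyNormedField K] (T : Cz K →L[K] Cz K) : Prop :=
  ∀ ε : ℝ, 0 < ε → ∃ S : Cz K →L[K] Cz K,
    Module.Finite K (LinearMap.range (S : Cz K →ₗ[K] Cz K)) ∧ ‖T - S‖ ≤ ε

/-- The closed unit ball of a non-archimedean valued field, as a subring
(the valuation ring). -/
def valRing {K : Type} [NontriviallyNormedField K]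
    (hna : IsNonarchimedean (norm : K → ℝ)) : Subring K where
  carrier := {x : K | ‖x‖ ≤ 1}
  mul_mem' := fun {a b} ha hb => by
    simp only [Set.mem_setOf_eq] at *
    rw [norm_mul]
    nlinarith [norm_nonneg a, norm_nonneg b]
  one_mem' := by simp
  add_mem' := fun {a b} ha hb => by
    simp only [Set.mem_setOf_eq] at *
    exact (hna a b).trans (max_le ha hb)
  zero_mem' := by simp
  neg_mem' := fun {a} ha => by simpa using ha

/-- The maximal ideal (open unit ball) of the valuation ring. -/
def valIdeal {K : Type} [NontriviallyNormedField K]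
    (hna : IsNonarchimedean (norm : K → ℝ)) : Ideal (valRing hna) where
  carrier := {x | ‖(x : K)‖ < 1}
  add_mem' := fun {a b} ha hb => by
    simp only [Set.mem_setOf_eq] at *
    push_cast
    exact ((hna a b)).trans_lt (max_lt ha hb)
  zero_mem' := by simp
  smul_mem' := fun c x hx => by
    simp only [Set.mem_setOf_eq, smul_eq_mul] at *
    push_cast
    rw [norm_mul]
    calc ‖(c : K)‖ * ‖(x : K)‖ ≤ 1 * ‖(x : K)‖ := by
          exact mul_le_mul_of_nonneg_right c.2 (norm_nonneg _)
      _ = ‖(x : K)‖ := one_mul _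
      _ < 1 := hx

/-- The residue class field of a non-archimedean valued field. -/
abbrev Residue {K : Type} [NontriviallyNormedField K]
    (hna : IsNonarchimedean (norm : K → ℝ)) : Type :=
  valRing hna ⧸ valIdeal hna

/-- A commutative ring is formally real if `-1` is not a sum of squares. -/
def FormallyRealRing (R : Type) [CommRing R] : Prop :=
  ¬ ∃ (n : ℕ) (a : Fin n → R), (∑ i, a i ^ 2) = -1

section helpers

variable {K : Type} [NontriviallyNormedField K]

lemma czA (f : Cz K) (i : ℕ) : ‖f i‖ ≤ ‖f‖ := by
  rw [← ZeroAtInftyContinuousMap.norm_toBCF_eq_norm]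
  exact f.toBCF.norm_coe_le_norm i

lemma czB (f : Cz K) {C : ℝ} (hC : 0 ≤ C) (h : ∀ i, ‖f i‖ ≤ C) : ‖f‖ ≤ C := by
  rw [← ZeroAtInftyContinuousMap.norm_toBCF_eq_norm]
  exact (BoundedContinuousFunction.norm_le hC).2 h

lemma cz_tendsto (f : Cz K) : Tendsto (fun i => f i) atTop (𝓝 0) := by
  have := f.zero_at_infty'
  rwa [cocompact_eq_atTop] at this

/-- Multiplication operator by `b`. -/
def mulOp (b : Cz K) : Cz K →L[K] Cz K :=
  LinearMap.mkContinuous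
    { toFun := fun x => b * x
      map_add' := fun x y => by ext i; exact mul_add _ _ _
      map_smul' := fun c x => by
        ext i
        simp only [ZeroAtInftyContinuousMap.smul_apply, RingHom.id_apply]
        show b i * (c • x i) = c • (b i * x i)
        simp only [smul_eq_mul]; ring }
    ‖b‖ (fun x => norm_mul_le b x)

lemma mulOp_apply (b : Cz K) (x : Cz K) (i : ℕ) : mulOp b x i = b i * x i := rfl

lemma e_apply (i j : ℕ) : e K i j = if j = i then (1:K) else 0 := rfl

lemma norm_e (i : ℕ) : ‖e K i‖ = 1 := by
  apply le_antisymm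
  · apply czB _ zero_le_one
    intro j
    by_cases h : j = i <;> simp [e_apply, h]
  · have := czA (e K i) i
    simpa [e_apply] using this

lemma norm_mulLike {b : Cz K} {M : Cz K →L[K] Cz K}
    (hM : ∀ (x : Cz K) (i : ℕ), M x i = b i * x i) : ‖M‖ = ‖b‖ := by
  apply le_antisymm
  · apply ContinuousLinearMap.opNorm_le_bound _ (norm_nonneg b)
    intro x
    apply czB _ (mul_nonneg (norm_nonneg b) (norm_nonneg x))
    intro i
    rw [hM, norm_mul]
    exact mul_le_mul (czA b i) (czA x i) (norm_nonneg _) (norm_nonneg _)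
  · apply czB _ (norm_nonneg M)
    intro i
    calc ‖b i‖ = ‖M (e K i) i‖ := by rw [hM]; simp [e_apply]
      _ ≤ ‖M (e K i)‖ := czA _ i
      _ ≤ ‖M‖ * ‖e K i‖ := M.le_opNorm _
      _ = ‖M‖ := by rw [norm_e, mul_one]

/-- Truncation of a sequence. -/
def trunc (b : Cz K) (N : ℕ) : Cz K where
  toFun := fun i => if i < N then b i else 0
  continuous_toFun := continuous_of_discreteTopology
  zero_at_infty' := by
    rw [cocompact_eq_atTop]
    apply tendsto_nhds_of_eventually_eq
    filter_upwards [eventually_ge_atTop N] with j hj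
    simp [not_lt.2 hj]

lemma trunc_apply (b : Cz K) (N i : ℕ) : trunc b N i = if i < N then b i else 0 := rfl

/-- Evaluation at `j` as an additive monoid hom. -/
def evalAM (j : ℕ) : Cz K →+ K where
  toFun := fun f => f j
  map_zero' := rfl
  map_add' := fun f g => rfl

lemma cz_sum_apply {s : Finset ℕ} (f : ℕ → Cz K) (j : ℕ) :
    (∑ i ∈ s, f i) j = ∑ i ∈ s, f i j :=
  map_sum (evalAM j) f s

lemma mulOp_trunc_finite (b : Cz K) (N : ℕ) :
    Module.Finite K (LinearMap.range (mulOp (trunc b N) : Cz K →ₗ[K] Cz K)) := by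
  have hle : LinearMap.range (mulOp (trunc b N) : Cz K →ₗ[K] Cz K) ≤
      Submodule.span K (Set.range fun i : Fin N => e K (i : ℕ)) := by
    rintro _ ⟨x, rfl⟩
    have : (mulOp (trunc b N)) x = ∑ i ∈ Finset.range N, (b i * x i) • e K i := by
      ext j
      rw [mulOp_apply, trunc_apply]
      rw [cz_sum_apply]
      have heq : ∀ i, ((b i * x i) • e K i) j = (b i * x i) * (if j = i then (1:K) else 0) := by
        intro i
        rw [ZeroAtInftyContinuousMap.smul_apply]
        simp [e_apply, smul_eq_mul]
      simp only [heq]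
      by_cases hj : j < N
      · rw [Finset.sum_eq_single j]
        · simp [hj]
        · intro i _ hij; simp [Ne.symm hij]
        · intro h; exact absurd (Finset.mem_range.2 hj) h
      · rw [if_neg hj, zero_mul]
        symm
        apply Finset.sum_eq_zero
        intro i hi
        have hne : j ≠ i := fun h => hj (h ▸ Finset.mem_range.1 hi)
        simp [hne]
    show (mulOp (trunc b N)) x ∈ _
    rw [this]
    apply Submodule.sum_mem
    intro i hi
    apply Submodule.smul_mem
    apply Submodule.subset_span
    exact ⟨⟨i, Finset.mem_range.1 hi⟩, rfl⟩
  haveI : Module.Finite K (Submodule.span K (Set.range fun i : Fin N => e K (i : ℕ))) :=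
    FiniteDimensional.span_of_finite K (Set.finite_range _)
  exact Submodule.finiteDimensional_of_le hle

end helpers

theorem stmt4 {K : Type} [NontriviallyNormedField K] [CompleteSpace K]
    (hna : IsNonarchimedean (norm : K → ℝ))
    (a : Cz K) :
    (∃ M : Cz K →L[K] Cz K, ∀ (x : Cz K) (i : ℕ), M x i = a i * x i) ∧
    (∀ M : Cz K →L[K] Cz K, (∀ (x : Cz K) (i : ℕ), M x i = a i * x i) →
      ‖M‖ = ‖a‖ ∧ (∀ x z : Cz K, pr (M x) z = pr x (M z)) ∧
      Tendsto (fun n => ‖M (e K n)‖) atTop (𝓝 (0 : ℝ)) ∧ IsCompactOp M) := by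
  constructor
  · exact ⟨mulOp a, mulOp_apply a⟩
  · intro M hM
    refine ⟨norm_mulLike hM, ?_, ?_, ?_⟩
    · intro x z
      unfold pr
      apply tsum_congr
      intro i
      rw [hM, hM]; ring
    · have h1 : ∀ n, ‖M (e K n)‖ = ‖a n‖ := by
        intro n
        apply le_antisymm
        · apply czB _ (norm_nonneg _)
          intro j
          rw [hM]
          by_cases h : j = n
          · subst h; simp [e_apply]
          · simp [e_apply, h]
        · calc ‖a n‖ = ‖M (e K n) n‖ := by rw [hM]; simp [e_apply]
            _ ≤ ‖M (e K n)‖ := czA _ n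
      simp only [h1]
      simpa using (cz_tendsto a).norm
    · intro ε hε
      have htd : Tendsto (fun n => ‖a n‖) atTop (𝓝 0) := by simpa using (cz_tendsto a).norm
      rw [Metric.tendsto_atTop] at htd
      obtain ⟨N, hN⟩ := htd ε hε
      refine ⟨mulOp (trunc a N), mulOp_trunc_finite a N, ?_⟩
      have hdiff : ∀ (x : Cz K) (i : ℕ),
          (M - mulOp (trunc a N)) x i = (a - trunc a N) i * x i := by
        intro x i
        simp only [ContinuousLinearMap.sub_apply, ZeroAtInftyContinuousMap.sub_apply,
          hM, mulOp_apply, trunc_apply]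
        ring
      rw [norm_mulLike hdiff]
      apply czB _ hε.le
      intro i
      rw [ZeroAtInftyContinuousMap.sub_apply, trunc_apply]
      by_cases h : i < N
      · simp [h]; exact hε.le
      · rw [if_neg h, sub_zero]
        have hd := hN i (not_lt.1 h)
        rw [Real.dist_eq, sub_zero] at hd
        exact le_of_lt (lt_of_le_of_lt (le_abs_self _) hd)
end
end

section
/- Let α ∈ K and λ ∈ c₀, and let T_λ = Σ λ_i P_i be compact. Then the operator norm of α·Id + T_λ on c₀ equals max{|α|, ‖T_λ‖}. -/
open Filter Topology

noncomputable section

namespace Stmt11Aux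

variable {K : Type} [NontriviallyNormedField K]

lemma norm_apply_le (x : Cz K) (j : ℕ) : ‖x j‖ ≤ ‖x‖ := by
  rw [← ZeroAtInftyContinuousMap.norm_toBCF_eq_norm]
  exact BoundedContinuousFunction.norm_coe_le_norm x.toBCF j

lemma norm_le_of (x : Cz K) (C : ℝ) (hC : 0 ≤ C) (h : ∀ j, ‖x j‖ ≤ C) : ‖x‖ ≤ C := by
  rw [← ZeroAtInftyContinuousMap.norm_toBCF_eq_norm]
  exact (BoundedContinuousFunction.norm_le hC).mpr h

lemma cz_na (hna : IsNonarchimedean (norm : K → ℝ)) (x z : Cz K) :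
    ‖x + z‖ ≤ max ‖x‖ ‖z‖ := by
  apply norm_le_of _ _ (le_max_of_le_left (norm_nonneg x))
  intro j
  calc ‖(x + z) j‖ = ‖x j + z j‖ := rfl
    _ ≤ max ‖x j‖ ‖z j‖ := hna _ _
    _ ≤ max ‖x‖ ‖z‖ := max_le_max (norm_apply_le x j) (norm_apply_le z j)

lemma norm_e_eq_one (i : ℕ) : ‖e K i‖ = 1 := by
  apply le_antisymm
  · apply norm_le_of _ _ zero_le_one
    intro j
    simp only [e, ZeroAtInftyContinuousMap.coe_mk]
    split <;> simp
  · have := norm_apply_le (e K i) i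
    simpa [e] using this

lemma op_na (hna : IsNonarchimedean (norm : K → ℝ)) (A B : Cz K →L[K] Cz K) :
    ‖A + B‖ ≤ max ‖A‖ ‖B‖ := by
  apply ContinuousLinearMap.opNorm_le_bound _ (le_max_of_le_left (norm_nonneg A))
  intro x
  calc ‖(A + B) x‖ = ‖A x + B x‖ := rfl
    _ ≤ max ‖A x‖ ‖B x‖ := cz_na hna _ _
    _ ≤ max (‖A‖ * ‖x‖) (‖B‖ * ‖x‖) :=
        max_le_max (A.le_opNorm x) (B.le_opNorm x)
    _ = max ‖A‖ ‖B‖ * ‖x‖ := (max_mul_of_nonneg _ _ (norm_nonneg x)).symm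

lemma cz_add_eq_of_lt (hna : IsNonarchimedean (norm : K → ℝ)) (x z : Cz K)
    (h : ‖z‖ < ‖x‖) : ‖x + z‖ = ‖x‖ := by
  apply le_antisymm
  · exact (cz_na hna x z).trans (max_le le_rfl h.le)
  · have hx : ‖x‖ ≤ max ‖x + z‖ ‖-z‖ := by
      have := cz_na hna (x + z) (-z)
      simpa using this
    rw [norm_neg] at hx
    rcases le_max_iff.mp hx with h1 | h2
    · exact h1
    · exact absurd (h2.trans_lt h) (lt_irrefl _)

end Stmt11Aux

set_option maxHeartbeats 2000000
set_option synthInstance.maxHeartbeats 1000000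
theorem stmt11 {K : Type} [NontriviallyNormedField K] [CompleteSpace K]
    (hna : IsNonarchimedean (norm : K → ℝ))
    (hres : FormallyRealRing (Residue hna))
    (y : ℕ → Cz K) (hy : ∀ i j, i ≠ j → pr (y i) (y j) = 0) (hy1 : ∀ i, ‖y i‖ = 1)
    (P : ℕ → (Cz K →L[K] Cz K))
    (hP : ∀ i x, P i x = (pr x (y i) / pr (y i) (y i)) • y i)
    (α : K) (lam : Cz K) (hsum : Summable (fun i => lam i • P i)) :
    ‖α • (1 : Cz K →L[K] Cz K) + (∑' i, lam i • P i)‖ =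
      max ‖α‖ ‖(∑' i, lam i • P i : Cz K →L[K] Cz K)‖ := by
  classical
  open Stmt11Aux in
  set T : Cz K →L[K] Cz K := ∑' i, lam i • P i with hT
  have hα1 : ‖α • (1 : Cz K →L[K] Cz K)‖ ≤ ‖α‖ := by
    apply ContinuousLinearMap.opNorm_le_bound _ (norm_nonneg α)
    intro x
    rw [ContinuousLinearMap.smul_apply, ContinuousLinearMap.one_apply, norm_smul]
  rcases eq_or_ne α 0 with rfl | hα
  · have h0 : (0:K) • (1 : Cz K →L[K] Cz K) + T = T := by
      ext x
      simp
    rw [h0, norm_zero]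
    exact (max_eq_right (ContinuousLinearMap.opNorm_nonneg T)).symm
  · have hαpos : 0 < ‖α‖ := norm_pos_iff.mpr hα
    obtain ⟨N, hN⟩ : ∃ N, ‖T - ∑ i ∈ Finset.range N, lam i • P i‖ < ‖α‖ := by
      have h1 := hsum.hasSum.tendsto_sum_nat
      obtain ⟨N, hN⟩ := (Metric.tendsto_atTop (α := Cz K →L[K] Cz K)).mp h1 ‖α‖ hαpos
      refine ⟨N, ?_⟩
      calc ‖T - ∑ i ∈ Finset.range N, lam i • P i‖
          = dist T (∑ i ∈ Finset.range N, lam i • P i) := by exact (dist_eq_norm T (∑ i ∈ Finset.range N, lam i • P i)).symm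
        _ = dist (∑ i ∈ Finset.range N, lam i • P i) T := by exact dist_comm _ _
        _ < ‖α‖ := hN N le_rfl
    set S : Cz K →L[K] Cz K := ∑ i ∈ Finset.range N, lam i • P i with hS
    have hδ0 : (0:ℝ) ≤ ‖T - S‖ := ContinuousLinearMap.opNorm_nonneg _
    have hpr : ∀ i n, pr (e K n) (y i) = y i n := by
      intro i n
      unfold pr
      rw [tsum_eq_single n]
      · simp [e]
      · intro j hj
        simp [e, hj]
    have hform : ∀ n, S (e K n) =
        ∑ i ∈ Finset.range N, (lam i * (y i n / pr (y i) (y i))) • y i := by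
      intro n
      rw [hS, ContinuousLinearMap.sum_apply]
      refine Finset.sum_congr rfl fun i _ => ?_
      rw [ContinuousLinearMap.smul_apply, hP, hpr, mul_smul, div_eq_mul_inv, mul_smul]
    have hterm : ∀ i, Tendsto (fun n => (lam i * (y i n / pr (y i) (y i))) • y i)
        atTop (𝓝 0) := by
      intro i
      have hyn : Tendsto (fun n => y i n) atTop (𝓝 (0:K)) := by
        have := (y i).zero_at_infty'
        rwa [cocompact_eq_atTop] at this
      have hscal : Tendsto (fun n => lam i * (y i n / pr (y i) (y i))) atTop (𝓝 (0:K)) := by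
        have := (hyn.div_const (pr (y i) (y i))).const_mul (lam i)
        simpa using this
      have := hscal.smul_const (y i)
      simpa using this
    have hSe : Tendsto (fun n => ‖S (e K n)‖) atTop (𝓝 0) := by
      have hsum0 := tendsto_finset_sum (Finset.range N) (fun i _ => hterm i)
      simp only [Finset.sum_const_zero] at hsum0
      have h2 : Tendsto (fun n => S (e K n)) atTop (𝓝 0) := by
        simpa only [hform] using hsum0
      simpa using h2.norm
    obtain ⟨n, hn⟩ : ∃ n, ‖S (e K n)‖ < ‖α‖ - ‖T - S‖ :=
      (hSe.eventually_lt_const (by linarith)).exists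
    have hTe : ‖T (e K n)‖ < ‖α‖ := by
      have h3 : T (e K n) = (T - S) (e K n) + S (e K n) := by
        simp
      calc ‖T (e K n)‖ = ‖(T - S) (e K n) + S (e K n)‖ := by rw [h3]
        _ ≤ ‖(T - S) (e K n)‖ + ‖S (e K n)‖ := norm_add_le _ _
        _ ≤ ‖T - S‖ * ‖e K n‖ + ‖S (e K n)‖ := by
            have := (T - S).le_opNorm (e K n)
            linarith
        _ = ‖T - S‖ + ‖S (e K n)‖ := by rw [norm_e_eq_one, mul_one]
        _ < ‖α‖ := by linarith
    have hsn : ‖α • (e K n)‖ = ‖α‖ := by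
      have h9 := norm_smul α (e K n)
      rw [norm_e_eq_one, mul_one] at h9
      exact h9
    have key : ‖(α • (1 : Cz K →L[K] Cz K) + T) (e K n)‖ = ‖α‖ := by
      have h4 : (α • (1 : Cz K →L[K] Cz K) + T) (e K n) = α • (e K n) + T (e K n) := by
        simp
      rw [h4]
      exact (cz_add_eq_of_lt hna (α • (e K n)) (T (e K n))
        (lt_of_lt_of_eq hTe hsn.symm)).trans hsn
    have hge : ‖α‖ ≤ ‖α • (1 : Cz K →L[K] Cz K) + T‖ := by
      have h5 := (α • (1 : Cz K →L[K] Cz K) + T).le_opNorm (e K n)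
      rwa [norm_e_eq_one, mul_one, key] at h5
    have hTle : ‖T‖ ≤ ‖α • (1 : Cz K →L[K] Cz K) + T‖ := by
      have h7 : (α • (1 : Cz K →L[K] Cz K) + T) + ((-α) • (1 : Cz K →L[K] Cz K)) = T := by
        ext x
        simp
      have h6 := op_na hna (α • (1 : Cz K →L[K] Cz K) + T) ((-α) • (1 : Cz K →L[K] Cz K))
      rw [h7] at h6
      have hα1' : ‖(-α) • (1 : Cz K →L[K] Cz K)‖ ≤ ‖α‖ := by
        apply ContinuousLinearMap.opNorm_le_bound _ (norm_nonneg α)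
        intro x
        rw [ContinuousLinearMap.smul_apply, ContinuousLinearMap.one_apply, norm_smul, norm_neg]
      exact h6.trans (max_le le_rfl (hα1'.trans hge))
    apply le_antisymm
    · exact (op_na hna _ _).trans (max_le_max hα1 le_rfl)
    · exact max_le hge hTle
end
end

section
/- Every nonzero continuous K-algebra homomorphism φ : 𝒮_Y(c₀) → K is either φ_n for some n ∈ ℕ (determined by φ_n(αId + T_λ) = α + λ_n) or φ₀ (determined by φ₀(αId + T_λ) = α). Consequently the spectrum Sp(𝒮_Y(c₀)) is in bijection with ℕ ∪ {0}, and 𝒮_Y(c₀) is isometrically isomorphic to C(ℕ*, K), the continuous K-valued functions on the one-point compactification ℕ* of the discrete space ℕ, via the Gelfand transform (αId + T_λ) ↦ (n ↦ α + λ_n, ∞ ↦ α). -/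
open Filter Topology

noncomputable section

namespace Stmt14Aux

variable {K : Type} [NontriviallyNormedField K]

lemma cz_norm_le (f : Cz K) {C : ℝ} (hC : 0 ≤ C)
    (h : ∀ n, ‖f n‖ ≤ C) : ‖f‖ ≤ C := by
  rw [← ZeroAtInftyContinuousMap.norm_toBCF_eq_norm]
  exact (BoundedContinuousFunction.norm_le hC).2 h

lemma cz_apply_le (f : Cz K) (n : ℕ) : ‖f n‖ ≤ ‖f‖ := by
  rw [← ZeroAtInftyContinuousMap.norm_toBCF_eq_norm]
  exact BoundedContinuousFunction.norm_coe_le_norm f.toBCF n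

lemma cz_nonarch (hna : IsNonarchimedean (norm : K → ℝ)) :
    IsNonarchimedean (norm : Cz K → ℝ) := by
  intro f g
  apply cz_norm_le _ (le_max_of_le_left (norm_nonneg f))
  intro n
  rw [ZeroAtInftyContinuousMap.add_apply]
  exact (hna _ _).trans (max_le_max (cz_apply_le f n) (cz_apply_le g n))

lemma summable_of_tendsto_cofinite {E : Type*} [NormedAddCommGroup E] [IsUltrametricDist E]
    [CompleteSpace E] {ι : Type*} {f : ι → E} (hf : Tendsto f cofinite (𝓝 0)) : Summable f := by
  rw [summable_iff_vanishing]
  intro e he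
  obtain ⟨ε, hε, hball⟩ := Metric.mem_nhds_iff.1 he
  have hev : ∀ᶠ i in cofinite, ‖f i‖ < ε / 2 := by
    have := hf.eventually (Metric.ball_mem_nhds (0 : E) (show (0:ℝ) < ε/2 by positivity))
    simpa only [Metric.mem_ball, dist_zero_right] using this
  rw [eventually_cofinite] at hev
  refine ⟨hev.toFinset, fun t ht => hball ?_⟩
  rw [Metric.mem_ball, dist_zero_right]
  have : ‖∑ b ∈ t, f b‖ ≤ ε / 2 := by
    apply IsUltrametricDist.norm_sum_le_of_forall_le_of_nonneg (by positivity)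
    intro i hi
    have h2 : i ∉ hev.toFinset := Finset.disjoint_left.1 ht hi
    simp only [Set.Finite.mem_toFinset, Set.mem_setOf_eq, not_not] at h2
    exact h2.le
  linarith

variable [CompleteSpace K]

lemma tendsto_apply_cofinite (x : Cz K) : Tendsto (fun i => x i) cofinite (𝓝 0) := by
  rw [Nat.cofinite_eq_atTop]
  simpa [cocompact_eq_atTop] using x.zero_at_infty'

lemma summable_mul (hna : IsNonarchimedean (norm : K → ℝ)) (x y : Cz K) :
    Summable fun i => x i * y i := by
  haveI := IsUltrametricDist.isUltrametricDist_of_isNonarchimedean_norm hna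
  apply summable_of_tendsto_cofinite
  have hb : ∀ i, ‖x i * y i‖ ≤ ‖y‖ * ‖x i‖ := by
    intro i
    rw [norm_mul, mul_comm]
    exact mul_le_mul_of_nonneg_right (cz_apply_le y i) (norm_nonneg _)
  have ht : Tendsto (fun i => ‖y‖ * ‖x i‖) cofinite (𝓝 0) := by
    have : Tendsto (fun i => ‖x i‖) cofinite (𝓝 0) := by
      simpa [Function.comp_def] using (continuous_norm.tendsto (0 : K)).comp (tendsto_apply_cofinite x)
    simpa using this.const_mul ‖y‖
  exact squeeze_zero_norm hb ht

lemma pr_norm_le (hna : IsNonarchimedean (norm : K → ℝ)) (x y : Cz K) :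
    ‖pr x y‖ ≤ ‖x‖ * ‖y‖ := by
  haveI := IsUltrametricDist.isUltrametricDist_of_isNonarchimedean_norm hna
  apply IsUltrametricDist.norm_tsum_le_of_forall_le_of_nonneg
    (mul_nonneg (norm_nonneg _) (norm_nonneg _))
  intro i
  rw [norm_mul]
  exact mul_le_mul (cz_apply_le x i) (cz_apply_le y i) (norm_nonneg _) (norm_nonneg _)

set_option maxHeartbeats 1000000 in
set_option synthInstance.maxHeartbeats 200000 in
lemma pr_self (hna : IsNonarchimedean (norm : K → ℝ))
    (hres : FormallyRealRing (Residue hna)) (x : Cz K) : ‖pr x x‖ = ‖x‖ ^ 2 := by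
  haveI := IsUltrametricDist.isUltrametricDist_of_isNonarchimedean_norm hna
  rcases eq_or_ne x 0 with rfl | hx
  · simp [pr]
  have hxpos : 0 < ‖x‖ := norm_pos_iff.2 hx
  -- the sup norm is attained at some index m
  have hfin : {i | ‖x‖ / 2 ≤ ‖x i‖}.Finite := by
    have := (tendsto_apply_cofinite x).eventually
      (Metric.ball_mem_nhds (0 : K) (show (0:ℝ) < ‖x‖/2 by positivity))
    rw [eventually_cofinite] at this
    refine this.subset fun i hi => ?_
    simp only [Set.mem_setOf_eq, Metric.mem_ball, dist_zero_right, not_lt] at hi ⊢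
    exact hi
  have hfne : hfin.toFinset.Nonempty := by
    rw [Finset.nonempty_iff_ne_empty]
    intro hemp
    have : ∀ i, ‖x i‖ ≤ ‖x‖ / 2 := by
      intro i
      by_contra hlt
      have : i ∈ hfin.toFinset := by
        simp only [Set.Finite.mem_toFinset, Set.mem_setOf_eq]
        linarith [not_le.1 hlt]
      simp [hemp] at this
    have := cz_norm_le x (by positivity) this
    linarith
  obtain ⟨m, hmA, hmmax⟩ := hfin.toFinset.exists_max_image (fun i => ‖x i‖) hfne
  have hmA' : ‖x‖ / 2 ≤ ‖x m‖ := by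
    simpa only [Set.Finite.mem_toFinset, Set.mem_setOf_eq] using hmA
  have hmax : ∀ i, ‖x i‖ ≤ ‖x m‖ := by
    intro i
    by_cases hi : i ∈ hfin.toFinset
    · exact hmmax i hi
    · simp only [Set.Finite.mem_toFinset, Set.mem_setOf_eq, not_le] at hi
      linarith
  have hxm : ‖x m‖ = ‖x‖ :=
    le_antisymm (cz_apply_le x m) (cz_norm_le x (norm_nonneg _) hmax)
  have hxm0 : x m ≠ 0 := by
    intro h
    rw [h, norm_zero] at hxm
    linarith
  set z : ℕ → K := fun i => x i / x m with hz
  have hz1 : ∀ i, ‖z i‖ ≤ 1 := by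
    intro i
    rw [hz, norm_div, div_le_one (by rw [hxm]; exact hxpos)]
    exact hmax i
  have hzm : z m = 1 := div_self hxm0
  have hzc : Tendsto z cofinite (𝓝 0) := by
    have := (tendsto_apply_cofinite x).div_const (x m)
    simpa [hz] using this
  have hsq : Summable fun i => z i * z i := by
    apply summable_of_tendsto_cofinite
    simpa using hzc.mul hzc
  set w : K := ∑' i, z i * z i with hw
  have hprw : pr x x = x m ^ 2 * w := by
    rw [pr, hw, ← tsum_mul_left]
    congr 1
    funext i
    rw [hz]
    field_simp
  have hw1 : ‖w‖ ≤ 1 := by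
    apply IsUltrametricDist.norm_tsum_le_of_forall_le_of_nonneg zero_le_one
    intro i
    rw [norm_mul]
    exact mul_le_one₀ (hz1 i) (norm_nonneg _) (hz1 i)
  -- show ‖w‖ = 1 using the formally real residue field
  have hw_eq : ‖w‖ = 1 := by
    refine le_antisymm hw1 (not_lt.1 fun hwlt => ?_)
    -- finite set where |z i| is large
    have hAfin : {i | (1:ℝ)/2 ≤ ‖z i‖}.Finite := by
      have := hzc.eventually (Metric.ball_mem_nhds (0 : K) (show (0:ℝ) < 1/2 by norm_num))
      rw [eventually_cofinite] at this
      refine this.subset fun i hi => ?_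
      simp only [Set.mem_setOf_eq, Metric.mem_ball, dist_zero_right, not_lt] at hi ⊢
      exact hi
    set s : Finset ℕ := hAfin.toFinset with hs
    have hms : m ∈ s := by
      simp only [hs, Set.Finite.mem_toFinset, Set.mem_setOf_eq, hzm, norm_one]
      norm_num
    have hsplit := Summable.sum_add_tsum_compl (s := s) hsq
    have htail : ‖∑' (i : ((s : Set ℕ)ᶜ : Set ℕ)), z i * z i‖ ≤ 1/4 := by
      apply IsUltrametricDist.norm_tsum_le_of_forall_le_of_nonneg (by norm_num)
      rintro ⟨i, his⟩
      have : ‖z i‖ ≤ 1/2 := by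
        have : i ∉ s := his
        simp only [hs, Set.Finite.mem_toFinset, Set.mem_setOf_eq, not_le] at this
        linarith
      rw [norm_mul]
      nlinarith [norm_nonneg (z i)]
    have hH : ‖∑ i ∈ s, z i * z i‖ < 1 := by
      have heq : ∑ i ∈ s, z i * z i = w + -(∑' (i : ((s : Set ℕ)ᶜ : Set ℕ)), z i * z i) := by
        rw [hw, ← hsplit]; ring
      rw [heq]
      calc ‖w + -(∑' (i : ((s : Set ℕ)ᶜ : Set ℕ)), z i * z i)‖
          ≤ max ‖w‖ ‖-(∑' (i : ((s : Set ℕ)ᶜ : Set ℕ)), z i * z i)‖ := hna _ _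
        _ < 1 := by
            rw [norm_neg]
            apply max_lt hwlt
            calc ‖∑' (i : ((s : Set ℕ)ᶜ : Set ℕ)), z i * z i‖ ≤ 1/4 := htail
              _ < 1 := by norm_num
    -- move to the valuation ring and residue field
    set Z : ℕ → valRing hna := fun i => ⟨z i, hz1 i⟩ with hZ
    have hHH : (∑ i ∈ s, Z i * Z i) ∈ valIdeal hna := by
      show ‖((∑ i ∈ s, Z i * Z i : valRing hna) : K)‖ < 1
      have : ((∑ i ∈ s, Z i * Z i : valRing hna) : K) = ∑ i ∈ s, z i * z i := by
        push_cast
        rfl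
      rw [this]
      exact hH
    set π : valRing hna →+* Residue hna := Ideal.Quotient.mk (valIdeal hna) with hπ
    have hq : ∑ i ∈ s, (π (Z i))^2 = 0 := by
      have h0 : π (∑ i ∈ s, Z i * Z i) = 0 := (Ideal.Quotient.eq_zero_iff_mem).2 hHH
      rw [map_sum π (fun i => Z i * Z i) s] at h0
      rw [← h0]
      refine Finset.sum_congr rfl fun i _ => ?_
      rw [map_mul, sq]
    have hZm : π (Z m) = 1 := by
      have : Z m = 1 := by
        apply Subtype.ext
        exact hzm
      rw [this, map_one]
    have hsum_erase : ∑ i ∈ s.erase m, (π (Z i))^2 = -1 := by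
      have heq := Finset.add_sum_erase s (fun i => (π (Z i))^2) hms
      simp only [hq, hZm, one_pow] at heq
      linear_combination heq
    apply hres
    refine ⟨(s.erase m).card, fun j => π (Z (((s.erase m).equivFin.symm j) : ℕ)), ?_⟩
    rw [← hsum_erase]
    rw [← Finset.sum_coe_sort (s.erase m) (fun i => (π (Z i))^2)]
    exact Equiv.sum_comp (s.erase m).equivFin.symm (fun i => (π (Z (i:ℕ)))^2)
  rw [hprw, norm_mul, hw_eq, mul_one, norm_pow, hxm]


/-- evaluation at a point as an additive monoid hom -/
def evalHom (n : ℕ) : Cz K →+ K where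
  toFun := fun f => f n
  map_zero' := rfl
  map_add' := fun f g => rfl

lemma e_apply (i j : ℕ) : e K i j = if j = i then (1:K) else 0 := rfl

lemma e_mul_self (i : ℕ) : e K i * e K i = e K i := by
  ext j
  rw [ZeroAtInftyContinuousMap.mul_apply, e_apply]
  by_cases h : j = i <;> simp [h]

lemma e_mul_ne {i j : ℕ} (h : i ≠ j) : e K i * e K j = 0 := by
  ext n
  rw [ZeroAtInftyContinuousMap.mul_apply, e_apply, e_apply]
  by_cases hn : n = i
  · subst hn
    simp [h]
  · simp [hn]

lemma partial_sum_apply (mu : Cz K) (N j : ℕ) :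
    (∑ i ∈ Finset.range N, mu i • e K i) j = if j ∈ Finset.range N then mu j else 0 := by
  rw [show (∑ i ∈ Finset.range N, mu i • e K i) j
      = evalHom j (∑ i ∈ Finset.range N, mu i • e K i) from rfl]
  rw [map_sum]
  rw [← Finset.sum_ite_eq (Finset.range N) j mu]
  refine Finset.sum_congr rfl fun i _ => ?_
  show (mu i • e K i) j = _
  rw [ZeroAtInftyContinuousMap.smul_apply, e_apply, smul_eq_mul]
  by_cases h : j = i <;> simp [h]

lemma partial_sum_tendsto (mu : Cz K) :
    Tendsto (fun N => ∑ i ∈ Finset.range N, mu i • e K i) atTop (𝓝 mu) := by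
  rw [Metric.tendsto_atTop]
  intro ε hε
  have := (tendsto_apply_cofinite mu).eventually
    (Metric.ball_mem_nhds (0 : K) (show (0:ℝ) < ε/2 by positivity))
  rw [Nat.cofinite_eq_atTop, eventually_atTop] at this
  obtain ⟨N₀, hN₀⟩ := this
  refine ⟨N₀, fun N hN => ?_⟩
  rw [dist_eq_norm]
  have hle : ‖∑ i ∈ Finset.range N, mu i • e K i - mu‖ ≤ ε/2 := by
    apply cz_norm_le _ (by positivity)
    intro j
    rw [ZeroAtInftyContinuousMap.sub_apply, partial_sum_apply]
    by_cases hj : j ∈ Finset.range N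
    · simp [hj]
      positivity
    · simp only [hj, if_neg, zero_sub, norm_neg]
      have : N ≤ j := by
        by_contra hc
        exact hj (Finset.mem_range.2 (not_le.1 hc))
      have := hN₀ j (le_trans hN this)
      simpa [dist_zero_right] using this.le
  linarith

lemma part3 (h : C(OnePoint ℕ, K)) : ∃ (a : K) (mu : Cz K),
    h OnePoint.infty = a ∧ ∀ n : ℕ, h (n : OnePoint ℕ) = a + mu n := by
  have hc : Tendsto (fun n : ℕ => h n) cofinite (𝓝 (h OnePoint.infty)) :=
    (OnePoint.continuous_iff_from_discrete h).1 h.continuous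
  refine ⟨h OnePoint.infty, ⟨⟨fun n => h n - h OnePoint.infty,
    continuous_of_discreteTopology⟩, ?_⟩, rfl, fun n => ?_⟩
  · rw [cocompact_eq_cofinite]
    have := hc.sub (tendsto_const_nhds (x := h OnePoint.infty) (f := cofinite))
    simpa using this
  · show h (n : OnePoint ℕ) = h OnePoint.infty + (h n - h OnePoint.infty)
    ring

lemma sq_eq_self' {x : K} (h : x * x = x) : x = 0 ∨ x = 1 := by
  have h2 : x * (x - 1) = 0 := by ring_nf; linear_combination h
  rcases mul_eq_zero.1 h2 with h3 | h3
  · exact Or.inl h3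
  · exact Or.inr (sub_eq_zero.1 h3)

lemma part1 (f : K → Cz K → K)
    (hcont : Continuous (fun p : K × Cz K => f p.1 p.2))
    (hadd : ∀ (a b : K) (mu nu : Cz K), f (a + b) (mu + nu) = f a mu + f b nu)
    (hsmul : ∀ (c a : K) (mu : Cz K), f (c * a) (c • mu) = c * f a mu)
    (hmul : ∀ (a b : K) (mu nu : Cz K),
      f (a * b) (a • nu + b • mu + mu * nu) = f a mu * f b nu)
    (hne : f ≠ fun _ _ => 0) :
    (∀ (a : K) (mu : Cz K), f a mu = a) ∨
      (∃ n : ℕ, ∀ (a : K) (mu : Cz K), f a mu = a + mu n) := by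
  set g : Cz K → K := fun mu => f 0 mu with hg
  have hgadd : ∀ mu nu, g (mu + nu) = g mu + g nu := by
    intro mu nu
    have := hadd 0 0 mu nu
    simpa [hg] using this
  have hgsmul : ∀ (c : K) mu, g (c • mu) = c * g mu := by
    intro c mu
    have := hsmul c 0 mu
    simpa [hg] using this
  have hgmul : ∀ mu nu, g (mu * nu) = g mu * g nu := by
    intro mu nu
    have := hmul 0 0 mu nu
    simpa [hg] using this
  have hg0 : g 0 = 0 := by
    have h1 := hgadd 0 0
    rw [add_zero] at h1
    exact right_eq_add.1 h1
  -- value on the "identity" part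
  have hf10 : f 1 0 = 1 := by
    have hc2 : f 1 0 * f 1 0 = f 1 0 := by
      have := hmul 1 1 0 0
      simpa using this.symm
    rcases sq_eq_self' hc2 with h0 | h1
    · exfalso
      apply hne
      funext b nu
      have := hmul 1 b 0 nu
      simp only [one_mul, one_smul, smul_zero, zero_mul, add_zero, zero_add] at this
      rw [h0, zero_mul] at this
      exact this
    · exact h1
  have hfa0 : ∀ a : K, f a 0 = a := by
    intro a
    have := hsmul a 1 0
    rw [mul_one, smul_zero] at this
    rw [this, hf10, mul_one]
  have hsplit : ∀ (a : K) (mu : Cz K), f a mu = a + g mu := by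
    intro a mu
    have := hadd a 0 0 mu
    rw [add_zero, zero_add] at this
    rw [this, hfa0, hg]
  have hgcont : Continuous g := by
    have : g = (fun p : K × Cz K => f p.1 p.2) ∘ (fun mu => ((0:K), mu)) := rfl
    rw [this]
    exact hcont.comp (continuous_const.prodMk continuous_id)
  -- g of a partial sum
  have hgsum : ∀ (mu : Cz K) (N : ℕ),
      g (∑ i ∈ Finset.range N, mu i • e K i) = ∑ i ∈ Finset.range N, mu i * g (e K i) := by
    intro mu N
    induction N with
    | zero => simpa using hg0
    | succ n ih =>
        rw [Finset.sum_range_succ, Finset.sum_range_succ, hgadd, ih, hgsmul]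
  have hge : ∀ i, g (e K i) = 0 ∨ g (e K i) = 1 := by
    intro i
    have := hgmul (e K i) (e K i)
    rw [e_mul_self] at this
    rcases sq_eq_self' this.symm with h | h
    · exact Or.inl h
    · exact Or.inr h
  have hlim : ∀ mu : Cz K, Tendsto (fun N => g (∑ i ∈ Finset.range N, mu i • e K i))
      atTop (𝓝 (g mu)) := fun mu => (hgcont.tendsto mu).comp (partial_sum_tendsto mu)
  by_cases hall : ∀ i, g (e K i) = 0
  · left
    intro a mu
    have h0 : ∀ N, g (∑ i ∈ Finset.range N, mu i • e K i) = 0 := by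
      intro N
      rw [hgsum]
      exact Finset.sum_eq_zero fun i _ => by rw [hall i, mul_zero]
    have : g mu = 0 := by
      have := hlim mu
      simp only [h0] at this
      exact (tendsto_nhds_unique tendsto_const_nhds this).symm
    rw [hsplit, this, add_zero]
  · right
    push_neg at hall
    obtain ⟨n, hn⟩ := hall
    have hgen : g (e K n) = 1 := (hge n).resolve_left hn
    have hother : ∀ i, i ≠ n → g (e K i) = 0 := by
      intro i hi
      by_contra hgi
      have hgi1 : g (e K i) = 1 := (hge i).resolve_left hgi
      have := hgmul (e K i) (e K n)
      rw [e_mul_ne hi, hg0, hgi1, hgen, one_mul] at this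
      exact one_ne_zero this.symm
    refine ⟨n, fun a mu => ?_⟩
    have h0 : ∀ N, n < N → g (∑ i ∈ Finset.range N, mu i • e K i) = mu n := by
      intro N hN
      rw [hgsum]
      rw [Finset.sum_eq_single n]
      · rw [hgen, mul_one]
      · intro i _ hi
        rw [hother i hi, mul_zero]
      · intro h
        exact absurd (Finset.mem_range.2 hN) h
    have : g mu = mu n := by
      refine tendsto_nhds_unique (hlim mu) ?_
      apply tendsto_nhds_of_eventually_eq
      filter_upwards [eventually_gt_atTop n] with N hN
      exact h0 N hN
    rw [hsplit, this]
set_option maxHeartbeats 1000000 in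
lemma cz_norm_smul (c : K) (f : Cz K) : ‖c • f‖ = ‖c‖ * ‖f‖ := norm_smul c f

lemma cz_add_smul (c d : K) (f : Cz K) : (c + d) • f = c • f + d • f := add_smul c d f

lemma part2 (hna : IsNonarchimedean (norm : K → ℝ))
    (hres : FormallyRealRing (Residue hna))
    (y : ℕ → Cz K) (hy : ∀ i j, i ≠ j → pr (y i) (y j) = 0) (hy1 : ∀ i, ‖y i‖ = 1)
    (P : ℕ → (Cz K →L[K] Cz K))
    (hP : ∀ i x, P i x = (pr x (y i) / pr (y i) (y i)) • y i)
    (hsum : ∀ lam : Cz K, Summable fun i => lam i • P i)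
    (a : K) (mu : Cz K) :
    ∃ h : C(OnePoint ℕ, K), h OnePoint.infty = a ∧
      (∀ n : ℕ, h (n : OnePoint ℕ) = a + mu n) ∧
      ‖h‖ = ‖a • (1 : Cz K →L[K] Cz K) + ∑' i, mu i • P i‖ := by
  haveI instK : IsUltrametricDist K :=
    IsUltrametricDist.isUltrametricDist_of_isNonarchimedean_norm hna
  haveI instCz : IsUltrametricDist (Cz K) :=
    IsUltrametricDist.isUltrametricDist_of_isNonarchimedean_norm (cz_nonarch hna)
  -- basic facts about the projections
  have hyy : ∀ i, ‖pr (y i) (y i)‖ = 1 := by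
    intro i
    rw [pr_self hna hres, hy1, one_pow]
  have hyy0 : ∀ i, pr (y i) (y i) ≠ 0 := by
    intro i h0
    have := hyy i
    rw [h0, norm_zero] at this
    norm_num at this
  have hPyy : ∀ i, P i (y i) = y i := by
    intro i
    rw [hP, div_self (hyy0 i), one_smul]
  have hPyne : ∀ i j, i ≠ j → P i (y j) = 0 := by
    intro i j hij
    rw [hP, hy j i (fun h => hij h.symm), zero_div, zero_smul]
  have hPle : ∀ i (x : Cz K), ‖P i x‖ ≤ ‖x‖ := by
    intro i x
    rw [hP, cz_norm_smul, norm_div, hyy, div_one, hy1, mul_one]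
    calc ‖pr x (y i)‖ ≤ ‖x‖ * ‖y i‖ := pr_norm_le hna x (y i)
      _ = ‖x‖ := by rw [hy1, mul_one]
  set T : Cz K →L[K] Cz K := a • (1 : Cz K →L[K] Cz K) + ∑' i, mu i • P i with hT
  have hmu0 : Tendsto (fun n => mu n) atTop (𝓝 0) := by
    have := tendsto_apply_cofinite mu
    rwa [Nat.cofinite_eq_atTop] at this
  -- the continuous function on the one-point compactification
  have hcf : Tendsto (fun n : ℕ => a + mu n) cofinite (𝓝 a) := by
    rw [Nat.cofinite_eq_atTop]
    simpa using tendsto_const_nhds.add hmu0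
  set h : C(OnePoint ℕ, K) := OnePoint.continuousMapMkDiscrete (fun n : ℕ => a + mu n) a hcf
    with hh
  have hhinf : h OnePoint.infty = a := rfl
  have hhn : ∀ n : ℕ, h (n : OnePoint ℕ) = a + mu n := fun n => rfl
  refine ⟨h, hhinf, hhn, ?_⟩
  -- T applied to a vector
  have hTapp : ∀ x : Cz K, T x = a • x + ∑' i, mu i • P i x := by
    intro x
    rw [hT, ContinuousLinearMap.add_apply, ContinuousLinearMap.smul_apply,
      ContinuousLinearMap.one_apply]
    congr 1
    have h1 := (ContinuousLinearMap.apply K (Cz K) x).map_tsum (hsum mu)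
    exact h1
  -- T on basis vectors
  have hTy : ∀ n, T (y n) = (a + mu n) • y n := by
    intro n
    rw [hTapp]
    have : ∑' i, mu i • P i (y n) = mu n • y n := by
      rw [tsum_eq_single n]
      · rw [hPyy]
      · intro i hi
        rw [hPyne i n hi, smul_zero]
    rw [this, cz_add_smul]
  have hTy_norm : ∀ n, ‖a + mu n‖ ≤ ‖T‖ := by
    intro n
    have := T.le_opNorm (y n)
    rw [hTy n, cz_norm_smul] at this
    simpa [hy1] using this
  have haT : ‖a‖ ≤ ‖T‖ := by
    have hten : Tendsto (fun n => ‖a + mu n‖) atTop (𝓝 ‖a‖) := by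
      have : Tendsto (fun n => a + mu n) atTop (𝓝 a) := by
        simpa using tendsto_const_nhds.add hmu0
      simpa using this.norm
    exact le_of_tendsto hten (Eventually.of_forall hTy_norm)
  -- ‖h‖ ≤ ‖T‖
  have h_le : ‖h‖ ≤ ‖T‖ := by
    rw [ContinuousMap.norm_le h (norm_nonneg T)]
    intro p
    induction p using OnePoint.rec with
    | infty => rw [hhinf]; exact haT
    | coe n => rw [hhn]; exact hTy_norm n
  -- ‖T‖ ≤ ‖h‖
  have hT_le : ‖T‖ ≤ ‖h‖ := by
    refine T.opNorm_le_bound (norm_nonneg h) fun x => ?_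
    rw [hTapp]
    have h1 : ‖a • x‖ ≤ ‖h‖ * ‖x‖ := by
      rw [cz_norm_smul]
      apply mul_le_mul_of_nonneg_right _ (norm_nonneg x)
      rw [← hhinf]
      exact h.norm_coe_le_norm OnePoint.infty
    have h2 : ‖∑' i, mu i • P i x‖ ≤ ‖h‖ * ‖x‖ := by
      apply IsUltrametricDist.norm_tsum_le_of_forall_le_of_nonneg
        (mul_nonneg (norm_nonneg h) (norm_nonneg x))
      intro i
      rw [cz_norm_smul]
      have hmui : ‖mu i‖ ≤ ‖h‖ := by
        have : mu i = (a + mu i) - a := by ring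
        rw [this]
        refine le_trans (le_trans (le_of_eq (by rw [sub_eq_add_neg])) (hna _ _)) ?_
        rw [norm_neg]
        apply max_le
        · rw [← hhn i]; exact h.norm_coe_le_norm _
        · rw [← hhinf]; exact h.norm_coe_le_norm _
      exact mul_le_mul hmui (hPle i x) (norm_nonneg _) (norm_nonneg h)
    calc ‖a • x + ∑' i, mu i • P i x‖ ≤ max ‖a • x‖ ‖∑' i, mu i • P i x‖ := cz_nonarch hna _ _
      _ ≤ ‖h‖ * ‖x‖ := max_le h1 h2
  exact le_antisymm h_le hT_le

end Stmt14Aux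

set_option maxHeartbeats 1000000 in
theorem stmt14 {K : Type} [NontriviallyNormedField K] [CompleteSpace K]
    (hna : IsNonarchimedean (norm : K → ℝ))
    (hres : FormallyRealRing (Residue hna))
    (y : ℕ → Cz K) (hy : ∀ i j, i ≠ j → pr (y i) (y j) = 0) (hy1 : ∀ i, ‖y i‖ = 1)
    (P : ℕ → (Cz K →L[K] Cz K))
    (hP : ∀ i x, P i x = (pr x (y i) / pr (y i) (y i)) • y i)
    (hsum : ∀ lam : Cz K, Summable fun i => lam i • P i) :
    (∀ f : K → Cz K → K,
      Continuous (fun p : K × Cz K => f p.1 p.2) →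
      (∀ (a b : K) (mu nu : Cz K), f (a + b) (mu + nu) = f a mu + f b nu) →
      (∀ (c a : K) (mu : Cz K), f (c * a) (c • mu) = c * f a mu) →
      (∀ (a b : K) (mu nu : Cz K),
        f (a * b) (a • nu + b • mu + mu * nu) = f a mu * f b nu) →
      (f ≠ fun _ _ => 0) →
      (∀ (a : K) (mu : Cz K), f a mu = a) ∨
        (∃ n : ℕ, ∀ (a : K) (mu : Cz K), f a mu = a + mu n)) ∧
    (∀ (a : K) (mu : Cz K), ∃ h : C(OnePoint ℕ, K),
      h OnePoint.infty = a ∧ (∀ n : ℕ, h (n : OnePoint ℕ) = a + mu n) ∧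
      ‖h‖ = ‖a • (1 : Cz K →L[K] Cz K) + ∑' i, mu i • P i‖) ∧
    (∀ h : C(OnePoint ℕ, K), ∃ (a : K) (mu : Cz K),
      h OnePoint.infty = a ∧ ∀ n : ℕ, h (n : OnePoint ℕ) = a + mu n) :=
  ⟨fun f hc ha hs hm hn0 => Stmt14Aux.part1 f hc ha hs hm hn0,
    fun a mu => Stmt14Aux.part2 hna hres y hy hy1 P hP hsum a mu,
    fun h => Stmt14Aux.part3 h⟩
end
end
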